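/- (Convergence of the inertial PC-algorithm II with outer-perturbation form, iPC II-1.) Let ν ∈ (0,1), μ ∈ [0, 1 − ν), γ ∈ (0,2), and let {α_k^{(1)}}, {α_k^{(2)}} ⊆ [0,1]. Let x^{-1}, x^0 ∈ H and let {x^k}, {y^k}, {β_k} satisfy, for every k ≥ 0: β_k > 0 with inf_k β_k > 0; y^k = P_C(x^k − β_k F(x^k) + α_k^{(1)}(x^k − x^{k−1})); β_k‖F(x^k) − F(y^k)‖ ≤ ν‖x^k − y^k‖; α_k^{(1)}‖x^k − x^{k−1}‖ ≤ μ‖x^k − y^k‖; d^k := (x^k − y^k) − β_k(F(x^k) − F(y^k)) + α_k^{(1)}(x^k − x^{k−1}) ≠ 0; ρ_k := ⟨x^k − y^k, d^k⟩/‖d^k‖²; x^{k+1} = P_C(x^k − γ ρ_k β_k F(y^k) + α_k^{(2)}(x^k − x^{k−1})). If Σ_{k=0}^∞ α_k^{(i)}‖x^k − x^{k−1}‖ < +∞ for i = 1, 2, then {x^k} converges weakly (i.e., ⟨x^k, u⟩ → ⟨x̂, u⟩ for every u ∈ H) to some point x̂ ∈ SOL(C,F). -/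

import Mathlib

open RealInnerProductSpace

set_option maxHeartbeats 2000000
open Filter

lemma ipc_key {H : Type*} [NormedAddCommGroup H] [InnerProductSpace ℝ H]
    {C : Set H} {P F : H → H}
    (hPmem : ∀ u : H, P u ∈ C)
    (hPchar : ∀ u : H, ∀ c ∈ C, ⟪u - P u, c - P u⟫ ≤ 0)
    (hmono : ∀ u v : H, 0 ≤ ⟪F u - F v, u - v⟫)
    {p : H} (hpC : p ∈ C) (hpS : ∀ z ∈ C, 0 ≤ ⟪F p, z - p⟫)
    {ν μ γ β α1 α2 ρ : ℝ} {X Xm Y D V : H}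
    (hν0 : 0 < ν) (hμ0 : 0 ≤ μ) (hνμ : ν + μ < 1)
    (hγ0 : 0 < γ) (hγ2 : γ < 2) (hβ : 0 < β) (hα10 : 0 ≤ α1) (hα2 : 0 ≤ α2)
    (hY : Y = P (X - β • F X + α1 • (X - Xm)))
    (hstep : β * ‖F X - F Y‖ ≤ ν * ‖X - Y‖)
    (hα1b : α1 * ‖X - Xm‖ ≤ μ * ‖X - Y‖)
    (hD : D = (X - Y) - β • (F X - F Y) + α1 • (X - Xm))
    (hDne : D ≠ 0)
    (hρ : ρ = ⟪X - Y, D⟫ / ‖D‖ ^ 2)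
    (hV : V = P (X - (γ * ρ * β) • F Y + α2 • (X - Xm))) :
    ‖V - p‖ ^ 2 ≤ ‖X - p‖ ^ 2
      - (γ * (2 - γ) * ((1 - ν - μ) / (1 + ν + μ) ^ 2) * (1 - ν - μ)) * ‖X - Y‖ ^ 2
      + 2 * (α2 * ‖X - Xm‖) * ‖V - p‖ := by
  set E := X - Xm with hE
  have hα1E : ‖α1 • E‖ ≤ μ * ‖X - Y‖ := by
    rwa [norm_smul, Real.norm_of_nonneg hα10]
  have hβF : ‖β • (F X - F Y)‖ ≤ ν * ‖X - Y‖ := by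
    rwa [norm_smul, Real.norm_of_nonneg hβ.le]
  -- h1 : inner lower bound
  have h1 : (1 - ν - μ) * ‖X - Y‖ ^ 2 ≤ ⟪X - Y, D⟫ := by
    rw [hD, inner_add_right, inner_sub_right, real_inner_self_eq_norm_sq]
    have c1 : ⟪X - Y, β • (F X - F Y)⟫ ≤ ν * ‖X - Y‖ * ‖X - Y‖ := by
      calc ⟪X - Y, β • (F X - F Y)⟫ ≤ ‖X - Y‖ * ‖β • (F X - F Y)‖ := real_inner_le_norm _ _
        _ ≤ ‖X - Y‖ * (ν * ‖X - Y‖) := by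
            exact mul_le_mul_of_nonneg_left hβF (norm_nonneg _)
        _ = ν * ‖X - Y‖ * ‖X - Y‖ := by ring
    have c2 : -(μ * ‖X - Y‖ * ‖X - Y‖) ≤ ⟪X - Y, α1 • E⟫ := by
      have := abs_real_inner_le_norm (X - Y) (α1 • E)
      have h2 := mul_le_mul_of_nonneg_left hα1E (norm_nonneg (X - Y))
      have := neg_abs_le (⟪X - Y, α1 • E⟫)
      nlinarith [abs_nonneg (⟪X - Y, α1 • E⟫)]
    nlinarith
  -- h2 : norm upper bound on D
  have h2 : ‖D‖ ≤ (1 + ν + μ) * ‖X - Y‖ := by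
    rw [hD]
    calc ‖X - Y - β • (F X - F Y) + α1 • E‖
        ≤ ‖X - Y - β • (F X - F Y)‖ + ‖α1 • E‖ := norm_add_le _ _
      _ ≤ ‖X - Y‖ + ‖β • (F X - F Y)‖ + ‖α1 • E‖ := by
          have := norm_sub_le (X - Y) (β • (F X - F Y)); linarith
      _ ≤ ‖X - Y‖ + ν * ‖X - Y‖ + μ * ‖X - Y‖ := by linarith
      _ = (1 + ν + μ) * ‖X - Y‖ := by ring
  have hD0 : 0 < ‖D‖ := norm_pos_iff.mpr hDne
  have hXY0 : 0 < ‖X - Y‖ := by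
    rcases lt_or_ge 0 ‖X - Y‖ with h | h
    · exact h
    · exfalso
      have : ‖X - Y‖ = 0 := le_antisymm h (norm_nonneg _)
      rw [this, mul_zero] at h2; linarith
  have hνμ1 : 0 < 1 + ν + μ := by linarith
  set r : ℝ := (1 - ν - μ) / (1 + ν + μ) ^ 2 with hr
  have hr0 : 0 < r := div_pos (by linarith) (by positivity)
  have hρl : r ≤ ρ := by
    rw [hρ, hr, div_le_div_iff₀ (by positivity) (by positivity)]
    have hDsq : ‖D‖ ^ 2 ≤ ((1 + ν + μ) * ‖X - Y‖) ^ 2 := by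
      nlinarith [norm_nonneg D]
    nlinarith
  have hρ0 : 0 < ρ := lt_of_lt_of_le hr0 hρl
  have hρD : ρ * ‖D‖ ^ 2 = ⟪X - Y, D⟫ := by
    rw [hρ]; field_simp
  -- main part
  set t : ℝ := γ * ρ with ht
  have ht0 : 0 ≤ t := by rw [ht]; exact mul_nonneg hγ0.le hρ0.le
  set w : H := α2 • E - (t * β) • F Y with hw
  set u : H := X - (γ * ρ * β) • F Y + α2 • E with hu
  have huw : u = X + w := by rw [hu, hw, ht]; module
  have hVC : V ∈ C := hV ▸ hPmem _
  have hYC : Y ∈ C := hY ▸ hPmem _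
  have hproj : ⟪u - V, p - V⟫ ≤ 0 := by
    rw [hV]; exact hPchar u p hpC
  have key0 : ‖V - p‖ ^ 2 ≤ ‖X - p‖ ^ 2 - ‖X - V‖ ^ 2 + 2 * ⟪w, V - p⟫ := by
    have hex : ‖u - p‖ ^ 2 - ‖u - V‖ ^ 2
        = ‖X - p‖ ^ 2 - ‖X - V‖ ^ 2 + 2 * ⟪w, V - p⟫ := by
      have e1 : u - p = (X - p) + w := by rw [huw]; abel
      have e2 : u - V = (X - V) + w := by rw [huw]; abel
      rw [e1, e2, norm_add_sq_real, norm_add_sq_real]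
      have e3 : ⟪X - p, w⟫ - ⟪X - V, w⟫ = ⟪w, V - p⟫ := by
        rw [← inner_sub_left]
        have e4 : X - p - (X - V) = V - p := by abel
        rw [e4, real_inner_comm]
      linarith
    have hid : ‖V - p‖ ^ 2 = ‖u - p‖ ^ 2 - ‖u - V‖ ^ 2 + 2 * ⟪u - V, p - V⟫ := by
      have e4 : u - p = (u - V) + (V - p) := by abel
      have e5 : ⟪u - V, V - p⟫ = -⟪u - V, p - V⟫ := by
        rw [← inner_neg_right]; congr 1; abel
      rw [e4, norm_add_sq_real]; linarith
    linarith
  have hwv : ⟪w, V - p⟫ = α2 * ⟪E, V - p⟫ - (t * β) * ⟪F Y, V - p⟫ := by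
    rw [hw, inner_sub_left, real_inner_smul_left, real_inner_smul_left]
  have hm1 : 0 ≤ ⟪F Y, Y - p⟫ := by
    have a := hmono Y p
    have b := hpS Y hYC
    have e : ⟪F Y, Y - p⟫ = ⟪F Y - F p, Y - p⟫ + ⟪F p, Y - p⟫ := by
      rw [inner_sub_left]; ring
    linarith
  set z : H := X - β • F X + α1 • E with hz
  have hchar2 : ⟪z - Y, V - Y⟫ ≤ 0 := by
    have := hPchar z V hVC
    rwa [← hY] at this
  have hβFY : β • F Y = D - (z - Y) := by rw [hD, hz]; module
  have hFYsplit : (t * β) * ⟪F Y, V - p⟫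
      = t * (⟪D, V - Y⟫ - ⟪z - Y, V - Y⟫) + t * (β * ⟪F Y, Y - p⟫) := by
    have e1 : V - p = (V - Y) + (Y - p) := by abel
    have e2 : β * ⟪F Y, V - Y⟫ = ⟪D, V - Y⟫ - ⟪z - Y, V - Y⟫ := by
      rw [← real_inner_smul_left, hβFY, inner_sub_left]
    have e3 : β * ⟪F Y, V - p⟫ = β * ⟪F Y, V - Y⟫ + β * ⟪F Y, Y - p⟫ := by
      rw [e1, inner_add_right]; ring
    rw [mul_assoc, e3, e2]; ring
  have hDsplit : ⟪D, V - Y⟫ = -⟪D, X - V⟫ + ⟪D, X - Y⟫ := by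
    have e : V - Y = (X - Y) - (X - V) := by abel
    rw [e, inner_sub_right]; ring
  have hDsplit' : t * ⟪D, V - Y⟫ = -(t * ⟪D, X - V⟫) + t * ⟪D, X - Y⟫ := by
    rw [hDsplit]; ring
  have hsq : 2 * t * ⟪D, X - V⟫ - ‖X - V‖ ^ 2 ≤ t ^ 2 * ‖D‖ ^ 2 := by
    have h := norm_sub_sq_real (X - V) (t • D)
    have h2 : (0 : ℝ) ≤ ‖(X - V) - t • D‖ ^ 2 := sq_nonneg _
    rw [real_inner_smul_right, norm_smul] at h
    have h3 : ⟪X - V, D⟫ = ⟪D, X - V⟫ := real_inner_comm _ _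
    have h4 : (‖t‖ * ‖D‖) ^ 2 = t ^ 2 * ‖D‖ ^ 2 := by
      rw [mul_pow, Real.norm_eq_abs, sq_abs]
    rw [h3, h4] at h
    linarith
  have hI0 : (0 : ℝ) ≤ ⟪X - Y, D⟫ := le_trans (mul_nonneg (by linarith) (sq_nonneg _)) h1
  have hdec : (γ * (2 - γ) * r * (1 - ν - μ)) * ‖X - Y‖ ^ 2
      ≤ 2 * t * ⟪D, X - Y⟫ - t ^ 2 * ‖D‖ ^ 2 := by
    have hcomm : ⟪D, X - Y⟫ = ⟪X - Y, D⟫ := real_inner_comm _ _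
    have e : 2 * t * ⟪X - Y, D⟫ - t ^ 2 * ‖D‖ ^ 2
        = γ * (2 - γ) * ρ * ⟪X - Y, D⟫ := by
      rw [ht, ← hρD]; ring
    have a1 : r * ⟪X - Y, D⟫ ≤ ρ * ⟪X - Y, D⟫ := mul_le_mul_of_nonneg_right hρl hI0
    have a2 : r * ((1 - ν - μ) * ‖X - Y‖ ^ 2) ≤ r * ⟪X - Y, D⟫ :=
      mul_le_mul_of_nonneg_left h1 hr0.le
    have hγγ : (0 : ℝ) ≤ γ * (2 - γ) := by nlinarith
    have s1 : r * (1 - ν - μ) * ‖X - Y‖ ^ 2 ≤ ρ * ⟪X - Y, D⟫ := by nlinarith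
    have s2 : γ * (2 - γ) * (r * (1 - ν - μ) * ‖X - Y‖ ^ 2)
        ≤ γ * (2 - γ) * (ρ * ⟪X - Y, D⟫) := mul_le_mul_of_nonneg_left s1 hγγ
    rw [hcomm, e]; linarith [s2]
  have b1 : 0 ≤ t * (-⟪z - Y, V - Y⟫) := mul_nonneg ht0 (by linarith)
  have b2 : 0 ≤ t * (β * ⟪F Y, Y - p⟫) := mul_nonneg ht0 (mul_nonneg hβ.le hm1)
  have b3 : 2 * α2 * ⟪E, V - p⟫ ≤ 2 * (α2 * ‖E‖) * ‖V - p‖ := by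
    have h := real_inner_le_norm E (V - p)
    nlinarith [mul_le_mul_of_nonneg_left h hα2]
  linarith [key0, hwv, hFYsplit, hDsplit', hsq, hdec, b1, b2, b3]

lemma quad_to_step {A B s : ℝ} (hA : 0 ≤ A) (hB : 0 ≤ B) (hs : 0 ≤ s)
    (h : B ^ 2 ≤ A ^ 2 + 2 * s * B) : B ≤ A + 2 * s := by
  by_contra hc
  push_neg at hc
  nlinarith

lemma seq_conv {b s : ℕ → ℝ} (hb : ∀ k, 0 ≤ b k) (hs : ∀ k, 0 ≤ s k)
    (hsum : Summable s) (h : ∀ k, b (k + 1) ≤ b k + 2 * s k) :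
    (∀ k, b k ≤ b 0 + 2 * ∑' j, s j) ∧ ∃ l, Tendsto b atTop (nhds l) := by
  have hpartial : ∀ n, ∑ k ∈ Finset.range n, s k ≤ ∑' j, s j := fun n =>
    hsum.sum_le_tsum _ (fun i _ => hs i)
  have hbnd : ∀ n, b n ≤ b 0 + 2 * ∑ k ∈ Finset.range n, s k := by
    intro n
    induction n with
    | zero => simp
    | succ n ih =>
      rw [Finset.sum_range_succ]
      calc b (n + 1) ≤ b n + 2 * s n := h n
        _ ≤ b 0 + 2 * ∑ k ∈ Finset.range n, s k + 2 * s n := by linarith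
        _ = b 0 + 2 * (∑ k ∈ Finset.range n, s k + s n) := by ring
  constructor
  · intro k
    calc b k ≤ b 0 + 2 * ∑ j ∈ Finset.range k, s j := hbnd k
      _ ≤ b 0 + 2 * ∑' j, s j := by linarith [hpartial k]
  · set g : ℕ → ℝ := fun n => b n - 2 * ∑ k ∈ Finset.range n, s k with hg
    have hanti : Antitone g := antitone_nat_of_succ_le (by
      intro n
      simp only [hg, Finset.sum_range_succ]
      have := h n
      linarith)
    have hbdd : BddBelow (Set.range g) := by
      refine ⟨-2 * ∑' j, s j, ?_⟩
      rintro v ⟨n, rfl⟩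
      simp only [hg]
      have := hpartial n
      have := hb n
      linarith
    have hgt : Tendsto g atTop (nhds (⨅ n, g n)) := tendsto_atTop_ciInf hanti hbdd
    have hst : Tendsto (fun n => ∑ k ∈ Finset.range n, s k) atTop (nhds (∑' j, s j)) :=
      hsum.hasSum.tendsto_sum_nat
    refine ⟨(⨅ n, g n) + 2 * ∑' j, s j, ?_⟩
    have : Tendsto (fun n => g n + 2 * ∑ k ∈ Finset.range n, s k) atTop
        (nhds ((⨅ n, g n) + 2 * ∑' j, s j)) := hgt.add (hst.const_mul 2)
    simpa only [hg, sub_add_cancel] using this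

lemma sum_range_quad {b c s : ℕ → ℝ} {σ M : ℝ}
    (h : ∀ k, b (k + 1) ^ 2 ≤ b k ^ 2 - σ * c k + 2 * s k * M) :
    ∀ n, σ * ∑ k ∈ Finset.range n, c k ≤ b 0 ^ 2 - b n ^ 2 + 2 * M * ∑ k ∈ Finset.range n, s k := by
  intro n
  induction n with
  | zero => simp
  | succ n ih =>
    rw [Finset.sum_range_succ, Finset.sum_range_succ]
    have := h n
    nlinarith

lemma weak_cluster {H : Type*} [NormedAddCommGroup H] [InnerProductSpace ℝ H] [CompleteSpace H]
    {x : ℕ → H} {K : ℝ} (hK : ∀ k, ‖x k‖ ≤ K)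
    (l : Filter ℕ) [hl : l.NeBot] :
    ∃ (xh : H) (G : Filter ℕ), G.NeBot ∧ G ≤ l ∧
      ∀ u : H, Tendsto (fun k => ⟪x k, u⟫) G (nhds ⟪xh, u⟫) := by
  set T : ℕ → WeakDual ℝ H := fun k => (InnerProductSpace.toDual ℝ H (x k) : WeakDual ℝ H)
    with hT
  set S : Set (WeakDual ℝ H) := WeakDual.toStrongDual ⁻¹' Metric.closedBall 0 K with hS
  have hTS : ∀ k, T k ∈ S := by
    intro k
    simp only [hS, Set.mem_preimage, Metric.mem_closedBall, dist_zero_right]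
    have : ‖WeakDual.toStrongDual (T k)‖ = ‖x k‖ := by
      simp only [hT]
      exact (InnerProductSpace.toDual ℝ H).norm_map (x k)
    rw [this]; exact hK k
  have hcomp : IsCompact S := WeakDual.isCompact_closedBall (𝕜 := ℝ) (E := H) 0 K
  have hle : Filter.map T l ≤ Filter.principal S :=
    le_principal_iff.mpr (Filter.mem_map.mpr (Filter.univ_mem' hTS))
  obtain ⟨xs, _, hcl⟩ := hcomp.exists_clusterPt hle
  set G : Filter ℕ := l ⊓ Filter.comap T (nhds xs) with hG
  have hmap : Filter.map T G = Filter.map T l ⊓ nhds xs := Filter.push_pull T l (nhds xs)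
  have hGne : G.NeBot := by
    rw [← Filter.map_neBot_iff T, hmap, inf_comm]
    exact hcl
  have hTt : Tendsto T G (nhds xs) := by
    rw [Tendsto, hmap]; exact inf_le_right
  refine ⟨(InnerProductSpace.toDual ℝ H).symm (WeakDual.toStrongDual xs), G, hGne, inf_le_left, ?_⟩
  intro u
  have he : Tendsto (fun f : WeakDual ℝ H => f u) (nhds xs) (nhds (xs u)) :=
    (WeakDual.eval_continuous u).tendsto xs
  have hcomb := he.comp hTt
  have e1 : (fun k => (T (k)) u) = fun k => ⟪x k, u⟫ := by
    funext k; simp only [hT]; exact InnerProductSpace.toDual_apply_apply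
  have e2 : ⟪(InnerProductSpace.toDual ℝ H).symm (WeakDual.toStrongDual xs), u⟫ = xs u := by
    rw [← InnerProductSpace.toDual_apply_apply]
    simp
  rw [e2]
  simpa only [Function.comp_def, e1] using hcomb

/-- `xm k` plays the role of `x^{k-1}` (with `xm 0` the arbitrary starting point `x^{-1}`). -/
theorem stmt_15 {H : Type*} [NormedAddCommGroup H] [InnerProductSpace ℝ H]
    [CompleteSpace H]
    (C : Set H) (hCne : C.Nonempty) (hCcl : IsClosed C) (hCcv : Convex ℝ C)
    (P : H → H) (hPmem : ∀ u : H, P u ∈ C)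
    (hPchar : ∀ u : H, ∀ c ∈ C, ⟪u - P u, c - P u⟫ ≤ 0)
    (F : H → H) (hmono : ∀ u v : H, 0 ≤ ⟪F u - F v, u - v⟫)
    (L : ℝ) (hL : 0 < L) (hLip : ∀ u v : H, ‖F u - F v‖ ≤ L * ‖u - v‖)
    (hSOL : ∃ p ∈ C, ∀ z ∈ C, 0 ≤ ⟪F p, z - p⟫)
    (ν μ γ : ℝ) (hν : ν ∈ Set.Ioo (0 : ℝ) 1) (hμ : μ ∈ Set.Ico (0 : ℝ) (1 - ν))
    (hγ : γ ∈ Set.Ioo (0 : ℝ) 2)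
    (α1 α2 : ℕ → ℝ) (hα1 : ∀ k, α1 k ∈ Set.Icc (0 : ℝ) 1)
    (hα2 : ∀ k, α2 k ∈ Set.Icc (0 : ℝ) 1)
    (x xm y : ℕ → H) (β : ℕ → ℝ) (d : ℕ → H) (ρ : ℕ → ℝ)
    (hxm : ∀ k, xm (k + 1) = x k)
    (hβpos : ∀ k, 0 < β k) (hβinf : ∃ b > (0 : ℝ), ∀ k, b ≤ β k)
    (hy : ∀ k, y k = P (x k - β k • F (x k) + α1 k • (x k - xm k)))
    (hstep : ∀ k, β k * ‖F (x k) - F (y k)‖ ≤ ν * ‖x k - y k‖)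
    (hα1b : ∀ k, α1 k * ‖x k - xm k‖ ≤ μ * ‖x k - y k‖)
    (hd : ∀ k, d k = (x k - y k) - β k • (F (x k) - F (y k)) + α1 k • (x k - xm k))
    (hdne : ∀ k, d k ≠ 0)
    (hρ : ∀ k, ρ k = ⟪x k - y k, d k⟫ / ‖d k‖ ^ 2)
    (hx : ∀ k, x (k + 1) = P (x k - (γ * ρ k * β k) • F (y k) + α2 k • (x k - xm k)))
    (hsum1 : Summable (fun k => α1 k * ‖x k - xm k‖))
    (hsum2 : Summable (fun k => α2 k * ‖x k - xm k‖)) :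
    ∃ xhat, (xhat ∈ C ∧ ∀ z ∈ C, 0 ≤ ⟪F xhat, z - xhat⟫) ∧
      ∀ u : H, Filter.Tendsto (fun k => ⟪x k, u⟫) Filter.atTop (nhds ⟪xhat, u⟫) := by
  obtain ⟨p, hpC, hpS⟩ := hSOL
  obtain ⟨bβ, hbβ0, hbβ⟩ := hβinf
  have hν0 := hν.1
  have hν1 := hν.2
  have hμ0 := hμ.1
  have hνμ : ν + μ < 1 := by have := hμ.2; linarith
  have hγ0 := hγ.1
  have hγ2 := hγ.2
  set σ : ℝ := γ * (2 - γ) * ((1 - ν - μ) / (1 + ν + μ) ^ 2) * (1 - ν - μ) with hσ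
  have hr0 : (0:ℝ) < (1 - ν - μ) / (1 + ν + μ) ^ 2 := div_pos (by linarith) (by positivity)
  have hσ0 : 0 < σ := by
    rw [hσ]
    exact mul_pos (mul_pos (mul_pos hγ0 (by linarith)) hr0) (by linarith)
  set s : ℕ → ℝ := fun k => α2 k * ‖x k - xm k‖ with hsdef
  have hs0 : ∀ k, 0 ≤ s k := fun k => mul_nonneg (hα2 k).1 (norm_nonneg _)
  have hsums : Summable s := hsum2
  have hyC : ∀ k, y k ∈ C := fun k => (hy k) ▸ hPmem _
  -- key inequality
  have hkey : ∀ q, q ∈ C → (∀ z ∈ C, 0 ≤ ⟪F q, z - q⟫) → ∀ k,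
      ‖x (k + 1) - q‖ ^ 2 ≤ ‖x k - q‖ ^ 2 - σ * ‖x k - y k‖ ^ 2
        + 2 * s k * ‖x (k + 1) - q‖ := by
    intro q hqC hqS k
    have h := ipc_key hPmem hPchar hmono hqC hqS hν0 hμ0 hνμ hγ0 hγ2 (hβpos k)
      (hα1 k).1 (hα2 k).1 (hy k) (hstep k) (hα1b k) (hd k) (hdne k) (hρ k) (hx k)
    simp only [hσ, hsdef]
    linarith [h]
  have hstepb : ∀ q, q ∈ C → (∀ z ∈ C, 0 ≤ ⟪F q, z - q⟫) → ∀ k,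
      ‖x (k + 1) - q‖ ≤ ‖x k - q‖ + 2 * s k := by
    intro q hqC hqS k
    apply quad_to_step (norm_nonneg _) (norm_nonneg _) (hs0 k)
    have h := hkey q hqC hqS k
    nlinarith [mul_nonneg hσ0.le (sq_nonneg ‖x k - y k‖)]
  have hlim : ∀ q, q ∈ C → (∀ z ∈ C, 0 ≤ ⟪F q, z - q⟫) →
      ∃ l, Tendsto (fun k => ‖x k - q‖) atTop (nhds l) :=
    fun q hqC hqS =>
      (seq_conv (fun k => norm_nonneg _) hs0 hsums (hstepb q hqC hqS)).2
  have hMb : ∀ k, ‖x k - p‖ ≤ ‖x 0 - p‖ + 2 * ∑' j, s j :=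
    (seq_conv (fun k => norm_nonneg _) hs0 hsums (hstepb p hpC hpS)).1
  set M : ℝ := ‖x 0 - p‖ + 2 * ∑' j, s j with hMdef
  have htsum0 : 0 ≤ ∑' j, s j := tsum_nonneg hs0
  have hM0 : 0 ≤ M := by rw [hMdef]; positivity
  set K : ℝ := M + ‖p‖ with hKdef
  have hK : ∀ k, ‖x k‖ ≤ K := by
    intro k
    calc ‖x k‖ = ‖(x k - p) + p‖ := by rw [sub_add_cancel]
      _ ≤ ‖x k - p‖ + ‖p‖ := norm_add_le _ _
      _ ≤ K := by rw [hKdef]; linarith [hMb k]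
  -- summability of ‖x k - y k‖²
  have hc : Summable (fun k => ‖x k - y k‖ ^ 2) := by
    apply summable_of_sum_range_le (c := (‖x 0 - p‖ ^ 2 + 2 * M * ∑' j, s j) / σ)
      (fun n => sq_nonneg _)
    intro n
    have hq : ∀ k, ‖x (k + 1) - p‖ ^ 2 ≤ ‖x k - p‖ ^ 2 - σ * ‖x k - y k‖ ^ 2
        + 2 * s k * M := by
      intro k
      have h1 := hkey p hpC hpS k
      have h2 : s k * ‖x (k + 1) - p‖ ≤ s k * M :=
        mul_le_mul_of_nonneg_left (hMb (k + 1)) (hs0 k)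
      linarith
    have h3 := sum_range_quad (b := fun k => ‖x k - p‖) (c := fun k => ‖x k - y k‖ ^ 2)
      (s := s) (σ := σ) (M := M) hq n
    have h4 : ∑ k ∈ Finset.range n, s k ≤ ∑' j, s j :=
      hsums.sum_le_tsum _ (fun i _ => hs0 i)
    rw [le_div_iff₀ hσ0]
    nlinarith [sq_nonneg (‖x n - p‖)]
  have hxy0 : Tendsto (fun k => ‖x k - y k‖) atTop (nhds 0) := by
    have h2 := hc.tendsto_atTop_zero
    have h3 : Tendsto (fun k => Real.sqrt (‖x k - y k‖ ^ 2)) atTop (nhds (Real.sqrt 0)) :=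
      (Real.continuous_sqrt.tendsto 0).comp h2
    rw [Real.sqrt_zero] at h3
    exact h3.congr (fun k => Real.sqrt_sq (norm_nonneg _))
  have hs1to0 : Tendsto (fun k => α1 k * ‖x k - xm k‖) atTop (nhds 0) :=
    hsum1.tendsto_atTop_zero
  -- weak limits along subfilters are solutions
  have hSOLof : ∀ (G : Filter ℕ) (xh : H), G.NeBot → G ≤ atTop →
      (∀ u, Tendsto (fun k => ⟪x k, u⟫) G (nhds ⟪xh, u⟫)) →
      xh ∈ C ∧ ∀ z ∈ C, 0 ≤ ⟪F xh, z - xh⟫ := by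
    intro G xh hGne hGle hGconv
    haveI := hGne
    have hyconv : ∀ u : H, Tendsto (fun k => ⟪y k, u⟫) G (nhds ⟪xh, u⟫) := by
      intro u
      have hdiff : Tendsto (fun k => ⟪x k - y k, u⟫) atTop (nhds 0) := by
        apply squeeze_zero_norm (a := fun k => ‖x k - y k‖ * ‖u‖)
        · intro k
          rw [Real.norm_eq_abs]
          exact abs_real_inner_le_norm _ _
        · simpa using hxy0.mul_const ‖u‖
      have h := (hGconv u).sub (hdiff.mono_left hGle)
      simp only [sub_zero] at h
      refine h.congr fun k => ?_
      rw [← inner_sub_left]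
      congr 1
      abel
    have hxhC : xh ∈ C := by
      by_contra hnot
      obtain ⟨f, u0, hfa, hfx⟩ := geometric_hahn_banach_closed_point hCcv hCcl hnot
      obtain ⟨v, hv⟩ := (InnerProductSpace.toDual ℝ H).surjective f
      have hfw : ∀ w : H, f w = ⟪w, v⟫ := by
        intro w
        rw [← hv, InnerProductSpace.toDual_apply_apply, real_inner_comm]
      have ht : Tendsto (fun k => f (y k)) G (nhds (f xh)) := by
        rw [hfw xh]
        exact (hyconv v).congr fun k => (hfw (y k)).symm
      have hle2 : f xh ≤ u0 :=
        le_of_tendsto ht (Filter.Eventually.of_forall fun k => (hfa _ (hyC k)).le)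
      linarith
    refine ⟨hxhC, ?_⟩
    have hminty : ∀ z ∈ C, 0 ≤ ⟪F z, z - xh⟫ := by
      intro z hz
      set g : ℕ → ℝ := fun k =>
        (1 / bβ) * (‖x k - y k‖ + α1 k * ‖x k - xm k‖) + L * ‖x k - y k‖ with hgdef
      have hg0 : ∀ k, 0 ≤ g k := by
        intro k
        have := norm_nonneg (x k - y k)
        have := mul_nonneg (hα1 k).1 (norm_nonneg (x k - xm k))
        have h1b : (0:ℝ) ≤ 1 / bβ := by positivity
        simp only [hgdef]
        nlinarith [hL.le]
      have hper : ∀ k, -(g k * (‖z‖ + K + ‖x k - y k‖)) ≤ ⟪F z, z - y k⟫ := by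
        intro k
        set w : H := z - y k with hwdef
        have hm1 : ⟪F (y k), w⟫ ≤ ⟪F z, w⟫ := by
          have h := hmono z (y k)
          rw [inner_sub_left] at h
          linarith
        have hm2 : ⟪F (x k), w⟫ - L * ‖x k - y k‖ * ‖w‖ ≤ ⟪F (y k), w⟫ := by
          have hsplit : ⟪F (y k), w⟫ = ⟪F (y k) - F (x k), w⟫ + ⟪F (x k), w⟫ := by
            rw [inner_sub_left]; ring
          have h1 : |⟪F (y k) - F (x k), w⟫| ≤ ‖F (y k) - F (x k)‖ * ‖w‖ :=
            abs_real_inner_le_norm _ _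
          have h2 : ‖F (y k) - F (x k)‖ ≤ L * ‖x k - y k‖ := by
            rw [norm_sub_rev]
            exact hLip _ _
          have h3 := neg_abs_le (⟪F (y k) - F (x k), w⟫)
          nlinarith [norm_nonneg w]
        have hm3 : ⟪x k - y k, w⟫ + α1 k * ⟪x k - xm k, w⟫ ≤ β k * ⟪F (x k), w⟫ := by
          have hch := hPchar (x k - β k • F (x k) + α1 k • (x k - xm k)) z hz
          rw [← hy k] at hch
          have hexp : ⟪(x k - β k • F (x k) + α1 k • (x k - xm k)) - y k, w⟫
              = ⟪x k - y k, w⟫ - β k * ⟪F (x k), w⟫ + α1 k * ⟪x k - xm k, w⟫ := by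
            have e : (x k - β k • F (x k) + α1 k • (x k - xm k)) - y k
                = ((x k - y k) - β k • F (x k)) + α1 k • (x k - xm k) := by abel
            rw [e, inner_add_left, inner_sub_left, real_inner_smul_left,
              real_inner_smul_left]
          rw [hexp] at hch
          linarith
        have hm4 : -((1 / bβ) * (‖x k - y k‖ + α1 k * ‖x k - xm k‖) * ‖w‖)
            ≤ ⟪F (x k), w⟫ := by
          have hA : -(‖x k - y k‖ * ‖w‖) ≤ ⟪x k - y k, w⟫ := by
            have := abs_real_inner_le_norm (x k - y k) w
            have := neg_abs_le (⟪x k - y k, w⟫)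
            linarith
          have hB : -((α1 k * ‖x k - xm k‖) * ‖w‖) ≤ α1 k * ⟪x k - xm k, w⟫ := by
            have h1 := abs_real_inner_le_norm (x k - xm k) w
            have h2 := neg_abs_le (⟪x k - xm k, w⟫)
            nlinarith [(hα1 k).1]
          have hsum : -((‖x k - y k‖ + α1 k * ‖x k - xm k‖) * ‖w‖)
              ≤ β k * ⟪F (x k), w⟫ := by nlinarith [hm3]
          have hadd : 0 ≤ ‖x k - y k‖ + α1 k * ‖x k - xm k‖ :=
            add_nonneg (norm_nonneg _) (mul_nonneg (hα1 k).1 (norm_nonneg _))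
          have hnum : 0 ≤ (‖x k - y k‖ + α1 k * ‖x k - xm k‖) * ‖w‖ :=
            mul_nonneg hadd (norm_nonneg _)
          rcases le_or_gt 0 (⟪F (x k), w⟫) with h | h
          · have : (0:ℝ) ≤ (1 / bβ) * (‖x k - y k‖ + α1 k * ‖x k - xm k‖) * ‖w‖ :=
              mul_nonneg (mul_nonneg (by positivity) hadd) (norm_nonneg _)
            linarith
          · have hββ : β k * ⟪F (x k), w⟫ ≤ bβ * ⟪F (x k), w⟫ := by
              nlinarith [hbβ k]
            have h2 : -((‖x k - y k‖ + α1 k * ‖x k - xm k‖) * ‖w‖)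
                ≤ bβ * ⟪F (x k), w⟫ := by linarith
            have h3 : -((‖x k - y k‖ + α1 k * ‖x k - xm k‖) * ‖w‖) / bβ
                ≤ ⟪F (x k), w⟫ := by
              rw [div_le_iff₀ hbβ0]
              nlinarith [h2]
            have h4 : -((1 / bβ) * (‖x k - y k‖ + α1 k * ‖x k - xm k‖) * ‖w‖)
                = -((‖x k - y k‖ + α1 k * ‖x k - xm k‖) * ‖w‖) / bβ := by ring
            rw [h4]
            exact h3
        have hwle : ‖w‖ ≤ ‖z‖ + K + ‖x k - y k‖ := by
          have h1 : ‖w‖ ≤ ‖z‖ + ‖y k‖ := norm_sub_le _ _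
          have h2 : ‖y k‖ ≤ ‖x k‖ + ‖x k - y k‖ := by
            calc ‖y k‖ = ‖x k - (x k - y k)‖ := by congr 1; abel
              _ ≤ ‖x k‖ + ‖x k - y k‖ := norm_sub_le _ _
          linarith [hK k]
        have hcomb : -(g k * ‖w‖) ≤ ⟪F z, w⟫ := by
          simp only [hgdef]
          nlinarith [hm1, hm2, hm4, norm_nonneg w, norm_nonneg (x k - y k), hL.le]
        have hlast : -(g k * (‖z‖ + K + ‖x k - y k‖)) ≤ -(g k * ‖w‖) := by
          nlinarith [mul_nonneg (hg0 k) (sub_nonneg.mpr hwle)]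
        exact le_trans hlast hcomb
      have hgto0 : Tendsto g atTop (nhds 0) := by
        have h1 : Tendsto (fun k => (1 / bβ) * (‖x k - y k‖ + α1 k * ‖x k - xm k‖))
            atTop (nhds ((1 / bβ) * (0 + 0))) := (hxy0.add hs1to0).const_mul _
        have h2 : Tendsto (fun k => L * ‖x k - y k‖) atTop (nhds (L * 0)) :=
          hxy0.const_mul _
        have h3 := h1.add h2
        simp only [mul_zero, add_zero] at h3
        exact h3
      have hGto0 : Tendsto (fun k => -(g k * (‖z‖ + K + ‖x k - y k‖))) atTop (nhds 0) := by
        have h1 : Tendsto (fun k => ‖z‖ + K + ‖x k - y k‖) atTop (nhds (‖z‖ + K + 0)) :=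
          tendsto_const_nhds.add hxy0
        have := (hgto0.mul h1).neg
        simpa using this
      have hFzy : Tendsto (fun k => ⟪F z, z - y k⟫) G (nhds ⟪F z, z - xh⟫) := by
        have e : ∀ w : H, ⟪F z, z - w⟫ = ⟪F z, z⟫ - ⟪w, F z⟫ := by
          intro w
          rw [inner_sub_right, real_inner_comm w (F z)]
        have h := (tendsto_const_nhds (x := ⟪F z, z⟫) (f := G)).sub (hyconv (F z))
        rw [← e] at h
        exact h.congr fun k => (e (y k)).symm
      exact le_of_tendsto_of_tendsto' (hGto0.mono_left hGle) hFzy hper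
    -- Minty to VI
    intro z hz
    have hseg : ∀ n : ℕ, 0 ≤ ⟪F (xh + ((1:ℝ)/(n+1)) • (z - xh)), z - xh⟫ := by
      intro n
      set t : ℝ := (1:ℝ)/(n+1) with htdef
      have ht0 : 0 < t := by positivity
      have ht1 : t ≤ 1 := by
        rw [htdef, div_le_one (by positivity)]
        exact le_add_of_nonneg_left (Nat.cast_nonneg n)
      have hmem : xh + t • (z - xh) ∈ C := by
        have h := hCcv hxhC hz (by linarith : (0:ℝ) ≤ 1 - t) ht0.le (by ring)
        have e : (1 - t) • xh + t • z = xh + t • (z - xh) := by module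
        rwa [e] at h
      have h0 := hminty _ hmem
      have e2 : (xh + t • (z - xh)) - xh = t • (z - xh) := by abel
      rw [e2, real_inner_smul_right] at h0
      nlinarith [h0]
    have hFt : Tendsto (fun n : ℕ => ⟪F (xh + ((1:ℝ)/(n+1)) • (z - xh)), z - xh⟫)
        atTop (nhds ⟪F xh, z - xh⟫) := by
      have hd0 : Tendsto (fun n : ℕ =>
          ⟪F (xh + ((1:ℝ)/(n+1)) • (z - xh)) - F xh, z - xh⟫) atTop (nhds 0) := by
        apply squeeze_zero_norm (a := fun n : ℕ => (1/(n+1 : ℝ)) * (L * ‖z - xh‖ ^ 2))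
        · intro n
          have h1 : |⟪F (xh + ((1:ℝ)/(n+1)) • (z - xh)) - F xh, z - xh⟫|
              ≤ ‖F (xh + ((1:ℝ)/(n+1)) • (z - xh)) - F xh‖ * ‖z - xh‖ :=
            abs_real_inner_le_norm _ _
          have h2 : ‖F (xh + ((1:ℝ)/(n+1)) • (z - xh)) - F xh‖
              ≤ L * ‖(xh + ((1:ℝ)/(n+1)) • (z - xh)) - xh‖ := hLip _ _
          have e2 : (xh + ((1:ℝ)/(n+1)) • (z - xh)) - xh = ((1:ℝ)/(n+1)) • (z - xh) := by
            abel
          rw [e2, norm_smul, Real.norm_eq_abs, abs_of_pos (by positivity)] at h2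
          rw [Real.norm_eq_abs]
          calc |⟪F (xh + ((1:ℝ)/(n+1)) • (z - xh)) - F xh, z - xh⟫|
              ≤ ‖F (xh + ((1:ℝ)/(n+1)) • (z - xh)) - F xh‖ * ‖z - xh‖ := h1
            _ ≤ (L * ((1/(n+1 : ℝ)) * ‖z - xh‖)) * ‖z - xh‖ :=
                mul_le_mul_of_nonneg_right h2 (norm_nonneg _)
            _ = (1/(n+1 : ℝ)) * (L * ‖z - xh‖ ^ 2) := by ring
        · have := tendsto_one_div_add_atTop_nhds_zero_nat.mul_const (L * ‖z - xh‖ ^ 2)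
          simpa using this
      have h := (tendsto_const_nhds (x := ⟪F xh, z - xh⟫) (f := atTop)).add hd0
      simp only [add_zero] at h
      refine h.congr fun n => ?_
      rw [← inner_add_left]
      congr 1
      abel
    exact ge_of_tendsto hFt (Filter.Eventually.of_forall hseg)
  -- uniqueness of weak limits
  have huniq : ∀ (G₁ G₂ : Filter ℕ) (x₁ x₂ : H), G₁.NeBot → G₂.NeBot →
      G₁ ≤ atTop → G₂ ≤ atTop →
      (∀ u, Tendsto (fun k => ⟪x k, u⟫) G₁ (nhds ⟪x₁, u⟫)) →
      (∀ u, Tendsto (fun k => ⟪x k, u⟫) G₂ (nhds ⟪x₂, u⟫)) → x₁ = x₂ := by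
    intro G₁ G₂ x₁ x₂ h1ne h2ne h1le h2le hc1 hc2
    haveI := h1ne
    haveI := h2ne
    obtain ⟨hx₁C, hx₁S⟩ := hSOLof G₁ x₁ h1ne h1le hc1
    obtain ⟨hx₂C, hx₂S⟩ := hSOLof G₂ x₂ h2ne h2le hc2
    obtain ⟨l₁, hl₁⟩ := hlim x₁ hx₁C hx₁S
    obtain ⟨l₂, hl₂⟩ := hlim x₂ hx₂C hx₂S
    have hid : ∀ k, ⟪x k, x₂ - x₁⟫
        = (‖x k - x₁‖ ^ 2 - ‖x k - x₂‖ ^ 2 - ‖x₁‖ ^ 2 + ‖x₂‖ ^ 2) / 2 := by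
      intro k
      have e1 := norm_sub_sq_real (x k) x₁
      have e2 := norm_sub_sq_real (x k) x₂
      rw [inner_sub_right]
      linarith
    have htend : Tendsto (fun k => ⟪x k, x₂ - x₁⟫) atTop
        (nhds ((l₁ ^ 2 - l₂ ^ 2 - ‖x₁‖ ^ 2 + ‖x₂‖ ^ 2) / 2)) := by
      have t1 : Tendsto (fun k => ‖x k - x₁‖ ^ 2) atTop (nhds (l₁ ^ 2)) := hl₁.pow 2
      have t2 : Tendsto (fun k => ‖x k - x₂‖ ^ 2) atTop (nhds (l₂ ^ 2)) := hl₂.pow 2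
      have := (((t1.sub t2).sub (tendsto_const_nhds (x := ‖x₁‖ ^ 2))).add
        (tendsto_const_nhds (x := ‖x₂‖ ^ 2))).div_const 2
      exact this.congr fun k => (hid k).symm
    have e₁ : ⟪x₁, x₂ - x₁⟫ = (l₁ ^ 2 - l₂ ^ 2 - ‖x₁‖ ^ 2 + ‖x₂‖ ^ 2) / 2 :=
      tendsto_nhds_unique (hc1 (x₂ - x₁)) (htend.mono_left h1le)
    have e₂ : ⟪x₂, x₂ - x₁⟫ = (l₁ ^ 2 - l₂ ^ 2 - ‖x₁‖ ^ 2 + ‖x₂‖ ^ 2) / 2 :=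
      tendsto_nhds_unique (hc2 (x₂ - x₁)) (htend.mono_left h2le)
    have hz : ⟪x₂ - x₁, x₂ - x₁⟫ = 0 := by
      rw [inner_sub_left]
      linarith
    have := inner_self_eq_zero.mp hz
    exact (sub_eq_zero.mp this).symm
  -- conclusion
  obtain ⟨xh, G, hGne, hGle, hGconv⟩ := weak_cluster hK atTop
  obtain ⟨hxhC, hxhS⟩ := hSOLof G xh hGne hGle hGconv
  refine ⟨xh, ⟨hxhC, hxhS⟩, ?_⟩
  intro u
  apply tendsto_of_subseq_tendsto
  intro ns hns
  have hbound : ∀ n, ⟪x (ns n), u⟫ ∈ Set.Icc (-(K * ‖u‖)) (K * ‖u‖) := by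
    intro n
    have h1 : |⟪x (ns n), u⟫| ≤ ‖x (ns n)‖ * ‖u‖ := abs_real_inner_le_norm _ _
    have h2 : ‖x (ns n)‖ * ‖u‖ ≤ K * ‖u‖ :=
      mul_le_mul_of_nonneg_right (hK (ns n)) (norm_nonneg u)
    have := abs_le.mp (le_trans h1 h2)
    exact ⟨this.1, this.2⟩
  obtain ⟨a, _, φ, hφmono, hφtend⟩ :=
    tendsto_subseq_of_bounded (Metric.isBounded_Icc (-(K * ‖u‖)) (K * ‖u‖)) hbound
  have hlmap : Tendsto (ns ∘ φ) atTop atTop := hns.comp hφmono.tendsto_atTop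
  haveI : (Filter.map (ns ∘ φ) atTop).NeBot := Filter.map_neBot
  obtain ⟨xh', G', hG'ne, hG'le, hG'conv⟩ := weak_cluster hK (Filter.map (ns ∘ φ) atTop)
  haveI := hG'ne
  have hG'top : G' ≤ atTop := le_trans hG'le hlmap
  have hxh' : xh' = xh := huniq G' G xh' xh hG'ne hGne hG'top hGle hG'conv hGconv
  have ht1 : Tendsto (fun k => ⟪x k, u⟫) (Filter.map (ns ∘ φ) atTop) (nhds a) :=
    tendsto_map'_iff.mpr hφtend
  have ht2 : Tendsto (fun k => ⟪x k, u⟫) G' (nhds a) := ht1.mono_left hG'le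
  have ha : a = ⟪xh, u⟫ := by
    have := tendsto_nhds_unique ht2 (hG'conv u)
    rw [this, hxh']
  refine ⟨φ, ?_⟩
  have := ha ▸ hφtend
  simpa [Function.comp_def] using this
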